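/- Let W ~ W_r(n, I_r) be a standard Wishart matrix, i.e., W = X Xᵀ where X is an r×n matrix of i.i.d. standard Gaussian entries, with n ≥ m. Then for any m-subsets I, J of {1,...,r}: E[det(W_{I×J})] = n!/(n−m)! if I = J, and E[det(W_{I×J})] = 0 if I ≠ J. -/

import Mathlib

open Matrix Finset MeasureTheory ProbabilityTheory

section AuxGauss
open Real Filter
open scoped NNReal ENNReal

lemma aux_pdf_eq (x : ℝ) :
    gaussianPDFReal 0 1 x = (Real.sqrt (2 * π))⁻¹ * Real.exp (-(2⁻¹) * x ^ 2) := by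
  simp only [gaussianPDFReal, NNReal.coe_one, mul_one, sub_zero]
  ring_nf

lemma aux_int_exp : Integrable (fun x : ℝ => Real.exp (-(2⁻¹) * x ^ 2)) :=
  integrable_exp_neg_mul_sq (by norm_num)

lemma aux_int_x : Integrable (fun x : ℝ => x * Real.exp (-(2⁻¹) * x ^ 2)) :=
  integrable_mul_exp_neg_mul_sq (by norm_num)

lemma aux_int_x2 : Integrable (fun x : ℝ => x ^ 2 * Real.exp (-(2⁻¹) * x ^ 2)) := by
  have := integrable_rpow_mul_exp_neg_mul_sq (b := 2⁻¹) (by norm_num) (s := 2) (by norm_num)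
  convert this using 2 with x
  rw [show ((2:ℝ) = ((2:ℕ):ℝ)) by norm_num, Real.rpow_natCast]

lemma aux_val_exp : ∫ x : ℝ, Real.exp (-(2⁻¹) * x ^ 2) = Real.sqrt (2 * π) := by
  rw [integral_gaussian]
  norm_num [div_eq_mul_inv, mul_comm]

lemma aux_val_x : ∫ x : ℝ, x * Real.exp (-(2⁻¹) * x ^ 2) = 0 := by
  have h := integral_neg_eq_self (fun x : ℝ => x * Real.exp (-(2⁻¹) * x ^ 2)) volume
  have hodd : (fun x : ℝ => (-x) * Real.exp (-(2⁻¹) * (-x) ^ 2))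
      = fun x : ℝ => -(x * Real.exp (-(2⁻¹) * x ^ 2)) := by
    funext x; rw [neg_sq]; ring
  rw [hodd, integral_neg] at h
  linarith

lemma aux_val_x2 : ∫ x : ℝ, x ^ 2 * Real.exp (-(2⁻¹) * x ^ 2) = Real.sqrt (2 * π) := by
  have hu : ∀ x : ℝ, HasDerivAt (fun y : ℝ => y) 1 x := fun x => hasDerivAt_id x
  have hv : ∀ x : ℝ, HasDerivAt (fun y : ℝ => -Real.exp (-(2⁻¹) * y ^ 2))
      (x * Real.exp (-(2⁻¹) * x ^ 2)) x := by
    intro x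
    have h1 : HasDerivAt (fun y : ℝ => -(2⁻¹) * y ^ 2) (-(2⁻¹) * (2 * x)) x := by
      simpa using (hasDerivAt_pow 2 x).const_mul (-(2⁻¹:ℝ))
    have h2 : HasDerivAt (fun y : ℝ => -Real.exp (-(2⁻¹) * y ^ 2))
        (-(Real.exp (-(2⁻¹) * x ^ 2) * (-(2⁻¹) * (2 * x)))) x := (h1.exp).neg
    convert h2 using 1
    ring
  have e1 : ((fun y : ℝ => y) * fun x : ℝ => x * Real.exp (-(2⁻¹) * x ^ 2))
      = fun x : ℝ => x ^ 2 * Real.exp (-(2⁻¹) * x ^ 2) := by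
    funext x; simp only [Pi.mul_apply]; ring
  have e2 : ((fun _ : ℝ => (1:ℝ)) * fun y : ℝ => -Real.exp (-(2⁻¹) * y ^ 2))
      = fun x : ℝ => -Real.exp (-(2⁻¹) * x ^ 2) := by
    funext x; simp only [Pi.mul_apply]; ring
  have e3 : ((fun y : ℝ => y) * fun y : ℝ => -Real.exp (-(2⁻¹) * y ^ 2))
      = fun x : ℝ => -(x * Real.exp (-(2⁻¹) * x ^ 2)) := by
    funext x; simp only [Pi.mul_apply]; ring
  have key := integral_mul_deriv_eq_deriv_mul_of_integrable (fun x _ => hu x) (fun x _ => hv x)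
    (by rw [e1]; exact aux_int_x2) (by rw [e2]; exact aux_int_exp.neg)
    (by rw [e3]; exact aux_int_x.neg)
  simp only [Pi.mul_def, one_mul, mul_neg, integral_neg, neg_neg] at key
  calc ∫ x : ℝ, x ^ 2 * Real.exp (-(2⁻¹) * x ^ 2)
      = ∫ x : ℝ, x * (x * Real.exp (-(2⁻¹) * x ^ 2)) := by
        congr 1; funext x; ring
    _ = Real.sqrt (2 * π) := by rw [key, aux_val_exp]

lemma aux_sqrt_pos : 0 < Real.sqrt (2 * π) := Real.sqrt_pos.mpr (by positivity)

lemma aux_gaussian_withDensity :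
    gaussianReal 0 1 = volume.withDensity
      (fun x => ((Real.toNNReal (gaussianPDFReal 0 1 x) : ℝ≥0) : ℝ≥0∞)) := by
  rw [gaussianReal_of_var_ne_zero _ one_ne_zero]
  rfl

lemma aux_integrable_gauss_fun {g : ℝ → ℝ}
    (h : Integrable (fun x => gaussianPDFReal 0 1 x * g x) volume) :
    Integrable g (gaussianReal 0 1) := by
  rw [aux_gaussian_withDensity]
  rw [integrable_withDensity_iff_integrable_smul (measurable_gaussianPDFReal 0 1).real_toNNReal]
  refine h.congr (ae_of_all _ fun x => ?_)
  simp [NNReal.smul_def, Real.coe_toNNReal _ (gaussianPDFReal_nonneg 0 1 x)]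

lemma aux_integral_gauss_fun (g : ℝ → ℝ) :
    ∫ x, g x ∂(gaussianReal 0 1) = ∫ x, gaussianPDFReal 0 1 x * g x := by
  rw [aux_gaussian_withDensity,
    integral_withDensity_eq_integral_smul (measurable_gaussianPDFReal 0 1).real_toNNReal]
  congr 1; funext x
  simp [NNReal.smul_def, Real.coe_toNNReal _ (gaussianPDFReal_nonneg 0 1 x)]

lemma aux_gauss_moment {c : ℕ} (hc : c ≤ 2) :
    Integrable (fun x : ℝ => x ^ c) (gaussianReal 0 1) ∧
      ∫ x, x ^ c ∂(gaussianReal 0 1) = if c = 1 then 0 else 1 := by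
  have hne := (ne_of_gt aux_sqrt_pos)
  interval_cases c
  · constructor
    · simpa using (integrable_const (1:ℝ))
    · simp
  · constructor
    · refine aux_integrable_gauss_fun ?_
      have : (fun x : ℝ => gaussianPDFReal 0 1 x * x ^ 1)
          = fun x : ℝ => (Real.sqrt (2 * π))⁻¹ * (x * Real.exp (-(2⁻¹) * x ^ 2)) := by
        funext x; rw [aux_pdf_eq]; ring
      rw [this]; exact aux_int_x.const_mul _
    · rw [aux_integral_gauss_fun]
      have : (fun x : ℝ => gaussianPDFReal 0 1 x * x ^ 1)
          = fun x : ℝ => (Real.sqrt (2 * π))⁻¹ * (x * Real.exp (-(2⁻¹) * x ^ 2)) := by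
        funext x; rw [aux_pdf_eq]; ring
      rw [this, integral_const_mul, aux_val_x]
      simp
  · constructor
    · refine aux_integrable_gauss_fun ?_
      have : (fun x : ℝ => gaussianPDFReal 0 1 x * x ^ 2)
          = fun x : ℝ => (Real.sqrt (2 * π))⁻¹ * (x ^ 2 * Real.exp (-(2⁻¹) * x ^ 2)) := by
        funext x; rw [aux_pdf_eq]; ring
      rw [this]; exact aux_int_x2.const_mul _
    · rw [aux_integral_gauss_fun]
      have : (fun x : ℝ => gaussianPDFReal 0 1 x * x ^ 2)
          = fun x : ℝ => (Real.sqrt (2 * π))⁻¹ * (x ^ 2 * Real.exp (-(2⁻¹) * x ^ 2)) := by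
        funext x; rw [aux_pdf_eq]; ring
      rw [this, integral_const_mul, aux_val_x2, if_neg (by norm_num)]
      exact inv_mul_cancel₀ hne

lemma aux_moment_omega {Ω : Type*} [MeasurableSpace Ω] {μ : Measure Ω}
    {Y : Ω → ℝ} (hYm : Measurable Y) (hYd : Measure.map Y μ = gaussianReal 0 1)
    {c : ℕ} (hc : c ≤ 2) :
    Integrable (fun ω => Y ω ^ c) μ ∧
      ∫ ω, Y ω ^ c ∂μ = if c = 1 then 0 else 1 := by
  have hpm : Measurable fun x : ℝ => x ^ c := measurable_id.pow_const c
  obtain ⟨hint, hval⟩ := aux_gauss_moment hc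
  constructor
  · have := (integrable_map_measure (hpm.aestronglyMeasurable) hYm.aemeasurable).mp
      (by rwa [hYd])
    exact this
  · have := integral_map (φ := Y) (f := fun x : ℝ => x ^ c) (μ := μ) hYm.aemeasurable
      hpm.aestronglyMeasurable
    rw [hYd] at this
    rw [this] at hval
    exact hval

end AuxGauss

lemma aux_indep_prod {Ω : Type*} [MeasurableSpace Ω] {μ : Measure Ω}
    [IsProbabilityMeasure μ] {ι : Type*} [DecidableEq ι] {f : ι → Ω → ℝ}
    (hindep : iIndepFun f μ)
    (hmeas : ∀ i, Measurable (f i)) (hint : ∀ i, Integrable (f i) μ)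
    (s : Finset ι) :
    Integrable (fun ω => ∏ i ∈ s, f i ω) μ ∧
      ∫ ω, ∏ i ∈ s, f i ω ∂μ = ∏ i ∈ s, ∫ ω, f i ω ∂μ := by
  classical
  induction s using Finset.cons_induction with
  | empty => simp
  | cons i s hi ih =>
    have hIndep : IndepFun (∏ j ∈ s, f j) (f i) μ :=
      hindep.indepFun_finset_prod_of_notMem hmeas hi
    have hps : (∏ j ∈ s, f j) = fun ω => ∏ j ∈ s, f j ω := by
      funext ω; simp
    have hint1 : Integrable ((∏ j ∈ s, f j) * f i) μ := by
      refine hIndep.integrable_mul ?_ (hint i)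
      rw [hps]; exact ih.1
    have hmul : ∫ ω, (∏ j ∈ s, f j ω) * f i ω ∂μ
        = (∫ ω, ∏ j ∈ s, f j ω ∂μ) * ∫ ω, f i ω ∂μ := by
      have := hIndep.integral_mul_eq_mul_integral (by rw [hps]; exact ih.1.aestronglyMeasurable)
        (hint i).aestronglyMeasurable
      simpa [hps, Pi.mul_apply] using this
    constructor
    · have : (fun ω => ∏ j ∈ Finset.cons i s hi, f j ω)
          = (∏ j ∈ s, f j) * f i := by
        funext ω; simp only [Finset.prod_cons, Pi.mul_apply, Finset.prod_apply]
        rw [mul_comm]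
      rw [this]; exact hint1
    · rw [Finset.prod_cons]
      have : (fun ω => ∏ j ∈ Finset.cons i s hi, f j ω)
          = fun ω => (∏ j ∈ s, f j ω) * f i ω := by
        funext ω; simp only [Finset.prod_cons]
        rw [mul_comm]
      rw [this, hmul, ih.2]
      ring

lemma aux_det_expand {m n : ℕ} (Y Z : Fin m → Fin n → ℝ) :
    (Matrix.of fun a b => ∑ j, Y a j * Z b j).det
      = ∑ k ∈ (univ : Finset (Fin m → Fin n)).filter (fun k => Function.Injective k),
          ∑ σ : Equiv.Perm (Fin m),
            ((Equiv.Perm.sign σ : ℤ) : ℝ) * ∏ b, (Y (σ b) (k b) * Z b (k b)) := by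
  classical
  have h1 : (Matrix.of fun a b => ∑ j, Y a j * Z b j).det
      = ∑ k : Fin m → Fin n, ∑ σ : Equiv.Perm (Fin m),
          ((Equiv.Perm.sign σ : ℤ) : ℝ) * ∏ b, (Y (σ b) (k b) * Z b (k b)) := by
    rw [Matrix.det_apply']
    have h2 : ∀ σ : Equiv.Perm (Fin m),
        ((Equiv.Perm.sign σ : ℤ) : ℝ) * ∏ b, (Matrix.of fun a b => ∑ j, Y a j * Z b j) (σ b) b
          = ∑ k : Fin m → Fin n,
              ((Equiv.Perm.sign σ : ℤ) : ℝ) * ∏ b, (Y (σ b) (k b) * Z b (k b)) := by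
      intro σ
      have h3 : ∏ b, (Matrix.of fun a b => ∑ j, Y a j * Z b j) (σ b) b
          = ∑ k : Fin m → Fin n, ∏ b, (Y (σ b) (k b) * Z b (k b)) := by
        have := Finset.prod_univ_sum (fun _ : Fin m => (univ : Finset (Fin n)))
          (fun b j => Y (σ b) j * Z b j)
        rw [Fintype.piFinset_univ] at this
        simpa using this
      rw [h3, Finset.mul_sum]
    rw [Finset.sum_congr rfl fun σ _ => h2 σ, Finset.sum_comm]
  rw [h1]
  refine (Finset.sum_subset (Finset.filter_subset _ _) fun k _ hk => ?_).symm
  simp only [Finset.mem_filter, Finset.mem_univ, true_and] at hk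
  -- k not injective : inner sum is zero
  have h4 : ∀ σ : Equiv.Perm (Fin m),
      ((Equiv.Perm.sign σ : ℤ) : ℝ) * ∏ b, (Y (σ b) (k b) * Z b (k b))
        = (((Equiv.Perm.sign σ : ℤ) : ℝ) * ∏ b, Y (σ b) (k b)) * ∏ b, Z b (k b) := by
    intro σ; rw [Finset.prod_mul_distrib]; ring
  rw [Finset.sum_congr rfl fun σ _ => h4 σ, ← Finset.sum_mul]
  have h5 : (∑ σ : Equiv.Perm (Fin m),
      ((Equiv.Perm.sign σ : ℤ) : ℝ) * ∏ b, Y (σ b) (k b))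
        = (Matrix.of fun a b => Y a (k b)).det := by
    rw [Matrix.det_apply']; rfl
  rw [h5]
  obtain ⟨a, b, hab, hne⟩ : ∃ a b, k a = k b ∧ a ≠ b := by
    simp only [Function.Injective, not_forall] at hk
    obtain ⟨a, b, h, hne⟩ := hk
    exact ⟨a, b, h, hne⟩
  rw [Matrix.det_zero_of_column_eq hne (fun i => by simp [hab]), zero_mul]

lemma aux_monomial {Ω : Type*} [MeasurableSpace Ω] (μ : Measure Ω) [IsProbabilityMeasure μ]
    {r n m : ℕ}
    (X : Ω → Matrix (Fin r) (Fin n) ℝ)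
    (hmeas : ∀ (i : Fin r) (j : Fin n), Measurable fun ω => X ω i j)
    (hindep : iIndepFun
      (fun (p : Fin r × Fin n) ω => X ω p.1 p.2) μ)
    (hdist : ∀ p : Fin r × Fin n,
      Measure.map (fun ω => X ω p.1 p.2) μ = gaussianReal 0 1)
    (u v : Fin m → Fin r) (k : Fin m → Fin n) (hk : Function.Injective k) :
    Integrable (fun ω => ∏ b, (X ω (u b) (k b) * X ω (v b) (k b))) μ ∧
      ∫ ω, ∏ b, (X ω (u b) (k b) * X ω (v b) (k b)) ∂μ
        = if (∀ b, u b = v b) then 1 else 0 := by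
  classical
  set e : Fin m ⊕ Fin m → Fin r × Fin n :=
    Sum.elim (fun b => (u b, k b)) (fun b => (v b, k b)) with he
  set c : Fin r × Fin n → ℕ := fun p => (univ.filter fun t => e t = p).card with hc
  have hprod : ∀ ω, ∏ b, (X ω (u b) (k b) * X ω (v b) (k b))
      = ∏ p : Fin r × Fin n, (X ω p.1 p.2) ^ c p := by
    intro ω
    have h1 : ∏ b, (X ω (u b) (k b) * X ω (v b) (k b))
        = ∏ t : Fin m ⊕ Fin m, X ω (e t).1 (e t).2 := by
      rw [Fintype.prod_sum_type, ← Finset.prod_mul_distrib]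
      simp [he]
    rw [h1, ← Finset.prod_fiberwise_of_maps_to (g := e)
      (fun t _ => Finset.mem_univ (e t)) (fun t => X ω (e t).1 (e t).2)]
    refine Finset.prod_congr rfl fun p _ => ?_
    calc ∏ t ∈ univ.filter fun t => e t = p, X ω (e t).1 (e t).2
        = ∏ _t ∈ univ.filter fun t => e t = p, X ω p.1 p.2 :=
          Finset.prod_congr rfl (fun t ht => by rw [(Finset.mem_filter.mp ht).2])
      _ = (X ω p.1 p.2) ^ c p := Finset.prod_const _
  have hc2 : ∀ p, c p ≤ 2 := by
    intro p
    have hle1 : (((univ : Finset (Fin m ⊕ Fin m)).filter fun t => e t = p).filter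
        (fun t => t.isLeft = true)).card ≤ 1 := by
      rw [Finset.card_le_one]
      intro t ht t' ht'
      simp only [Finset.mem_filter, Finset.mem_univ, true_and] at ht ht'
      rcases t with a | a
      · rcases t' with a' | a'
        · have h1 : ((u a, k a) : Fin r × Fin n) = p := ht.1
          have h2 : ((u a', k a') : Fin r × Fin n) = p := ht'.1
          rw [← h2] at h1
          rw [hk (congrArg Prod.snd h1)]
        · simp at ht'
      · simp at ht
    have hle2 : (((univ : Finset (Fin m ⊕ Fin m)).filter fun t => e t = p).filter
        (fun t => ¬ t.isLeft = true)).card ≤ 1 := by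
      rw [Finset.card_le_one]
      intro t ht t' ht'
      simp only [Finset.mem_filter, Finset.mem_univ, true_and] at ht ht'
      rcases t with a | a
      · simp at ht
      · rcases t' with a' | a'
        · simp at ht'
        · have h1 : ((v a, k a) : Fin r × Fin n) = p := ht.1
          have h2 : ((v a', k a') : Fin r × Fin n) = p := ht'.1
          rw [← h2] at h1
          rw [hk (congrArg Prod.snd h1)]
    have hsplit := Finset.card_filter_add_card_filter_not
      (s := (univ : Finset (Fin m ⊕ Fin m)).filter fun t => e t = p)
      (p := fun t => t.isLeft = true)
    have hcp : c p = ((univ : Finset (Fin m ⊕ Fin m)).filter fun t => e t = p).card := rfl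
    omega
  have hXmeas : ∀ p : Fin r × Fin n, Measurable fun ω => (X ω p.1 p.2) ^ c p :=
    fun p => ((hmeas p.1 p.2).pow_const _)
  have hmom := fun p : Fin r × Fin n =>
    aux_moment_omega (hmeas p.1 p.2) (hdist p) (hc2 p)
  have hpow : iIndepFun
      (fun (p : Fin r × Fin n) ω => (X ω p.1 p.2) ^ c p) μ := by
    have := hindep.comp (fun p (y : ℝ) => y ^ c p)
      (fun p => measurable_id.pow_const _)
    exact this
  obtain ⟨hint, hval⟩ := aux_indep_prod hpow hXmeas (fun p => (hmom p).1) Finset.univ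
  have hfun : (fun ω => ∏ b, (X ω (u b) (k b) * X ω (v b) (k b)))
      = fun ω => ∏ p : Fin r × Fin n, (X ω p.1 p.2) ^ c p := funext hprod
  constructor
  · rw [hfun]; exact hint
  · rw [hfun, hval, Finset.prod_congr rfl (fun p _ => (hmom p).2)]
    by_cases hall : ∀ b, u b = v b
    · rw [if_pos hall]
      refine Finset.prod_eq_one fun p _ => ?_
      rw [if_neg]
      intro h1
      rw [hc] at h1
      obtain ⟨t, ht⟩ := Finset.card_eq_one.mp h1
      have hmem : ∀ t', t' ∈ (univ : Finset (Fin m ⊕ Fin m)).filter (fun t => e t = p)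
          ↔ t' = t := by
        intro t'; rw [ht, Finset.mem_singleton]
      have htm : e t = p := by
        have := (hmem t).mpr rfl
        simpa [Finset.mem_filter] using this
      have hswap : e (t.swap) = p := by
        rcases t with b | b
        · show ((v b, k b) : Fin r × Fin n) = p
          rw [← hall b]; exact htm
        · show ((u b, k b) : Fin r × Fin n) = p
          rw [hall b]; exact htm
      have hcontra := (hmem t.swap).mp (by simp [Finset.mem_filter, hswap])
      rcases t with b | b <;> simp at hcontra
    · rw [if_neg hall]
      push_neg at hall
      obtain ⟨b0, hb0⟩ := hall
      refine Finset.prod_eq_zero (Finset.mem_univ ((u b0, k b0) : Fin r × Fin n)) ?_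
      have h1 : c (u b0, k b0) = 1 := by
        rw [hc, Finset.card_eq_one]
        refine ⟨Sum.inl b0, ?_⟩
        ext t
        simp only [Finset.mem_filter, Finset.mem_univ, true_and, Finset.mem_singleton]
        constructor
        · intro h
          rcases t with a | a
          · have h2 : k a = k b0 := congrArg Prod.snd h
            rw [hk h2]
          · have h2 : k a = k b0 := congrArg Prod.snd h
            have h3 : a = b0 := hk h2
            subst h3
            exact absurd (congrArg Prod.fst h).symm hb0
        · rintro rfl; rfl
      rw [h1, if_pos rfl]

theorem expectation_minor_standard_wishart
    {Ω : Type*} [MeasurableSpace Ω] (μ : Measure Ω) [IsProbabilityMeasure μ]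
    {r n m : ℕ} (hmn : m ≤ n)
    (X : Ω → Matrix (Fin r) (Fin n) ℝ)
    (hmeas : ∀ (i : Fin r) (j : Fin n), Measurable fun ω => X ω i j)
    (hindep : iIndepFun
      (fun (p : Fin r × Fin n) ω => X ω p.1 p.2) μ)
    (hdist : ∀ p : Fin r × Fin n,
      Measure.map (fun ω => X ω p.1 p.2) μ = gaussianReal 0 1)
    (I J : Finset (Fin r)) (hI : I.card = m) (hJ : J.card = m) :
    (I = J →
      ∫ ω, ((X ω * (X ω)ᵀ).submatrix (I.orderEmbOfFin hI) (J.orderEmbOfFin hJ)).det ∂μ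
        = (n.factorial : ℝ) / ((n - m).factorial : ℝ)) ∧
    (I ≠ J →
      ∫ ω, ((X ω * (X ω)ᵀ).submatrix (I.orderEmbOfFin hI) (J.orderEmbOfFin hJ)).det ∂μ
        = 0) := by
  classical
  set I' : Fin m → Fin r := ⇑(I.orderEmbOfFin hI) with hI'
  set J' : Fin m → Fin r := ⇑(J.orderEmbOfFin hJ) with hJ'
  set T : Finset (Fin m → Fin n) :=
    (univ : Finset (Fin m → Fin n)).filter (fun k => Function.Injective k) with hT
  -- pointwise expansion
  have hpt : ∀ ω, ((X ω * (X ω)ᵀ).submatrix (I.orderEmbOfFin hI) (J.orderEmbOfFin hJ)).det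
      = ∑ k ∈ T, ∑ σ : Equiv.Perm (Fin m),
          ((Equiv.Perm.sign σ : ℤ) : ℝ)
            * ∏ b, (X ω (I' (σ b)) (k b) * X ω (J' b) (k b)) := by
    intro ω
    have hM : (X ω * (X ω)ᵀ).submatrix (I.orderEmbOfFin hI) (J.orderEmbOfFin hJ)
        = Matrix.of fun a b => ∑ j, (X ω (I' a) j) * (X ω (J' b) j) := by
      ext a b
      simp [Matrix.mul_apply, Matrix.submatrix_apply, hI', hJ']
    rw [hM, aux_det_expand]
  have hmono := fun (σ : Equiv.Perm (Fin m)) (k : Fin m → Fin n)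
      (hk : Function.Injective k) =>
    aux_monomial μ X hmeas hindep hdist (fun b => I' (σ b)) J' k hk
  -- exchange integral and sums
  have hInt : ∫ ω, ((X ω * (X ω)ᵀ).submatrix (I.orderEmbOfFin hI) (J.orderEmbOfFin hJ)).det ∂μ
      = ∑ k ∈ T, ∑ σ : Equiv.Perm (Fin m),
          ((Equiv.Perm.sign σ : ℤ) : ℝ)
            * (if ∀ b, I' (σ b) = J' b then (1:ℝ) else 0) := by
    have hfun : (fun ω => ((X ω * (X ω)ᵀ).submatrix (I.orderEmbOfFin hI)
        (J.orderEmbOfFin hJ)).det)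
        = fun ω => ∑ k ∈ T, ∑ σ : Equiv.Perm (Fin m),
            ((Equiv.Perm.sign σ : ℤ) : ℝ)
              * ∏ b, (X ω (I' (σ b)) (k b) * X ω (J' b) (k b)) := funext hpt
    rw [hfun]
    have hkinj : ∀ k ∈ T, Function.Injective k := by
      intro k hk
      exact (Finset.mem_filter.mp hk).2
    rw [integral_finset_sum]
    · refine Finset.sum_congr rfl fun k hk => ?_
      rw [integral_finset_sum]
      · refine Finset.sum_congr rfl fun σ _ => ?_
        rw [integral_const_mul, (hmono σ k (hkinj k hk)).2]
      · exact fun σ _ => ((hmono σ k (hkinj k hk)).1.const_mul _)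
    · intro k hk
      exact integrable_finset_sum _ fun σ _ => ((hmono σ k (hkinj k hk)).1.const_mul _)
  constructor
  · -- case I = J
    intro hIJ
    have hfunIJ : I' = J' := by subst hIJ; rfl
    have hterm : ∀ σ : Equiv.Perm (Fin m),
        ((Equiv.Perm.sign σ : ℤ) : ℝ) * (if ∀ b, I' (σ b) = J' b then (1:ℝ) else 0)
          = if σ = 1 then (1:ℝ) else 0 := by
      intro σ
      by_cases hσ : σ = 1
      · subst hσ
        rw [if_pos (fun b => by simp [hfunIJ]), if_pos rfl]
        simp
      · rw [if_neg, if_neg hσ, mul_zero]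
        intro hall
        apply hσ
        apply Equiv.ext
        intro b
        have h1 : I' (σ b) = I' b := by rw [hall b, hfunIJ]
        have h2 := (I.orderEmbOfFin hI).injective h1
        simpa using h2
    rw [hInt]
    have hsum1 : ∀ k ∈ T, ∑ σ : Equiv.Perm (Fin m),
        ((Equiv.Perm.sign σ : ℤ) : ℝ) * (if ∀ b, I' (σ b) = J' b then (1:ℝ) else 0)
          = 1 := by
      intro k _
      rw [Finset.sum_congr rfl fun σ _ => hterm σ]
      rw [Finset.sum_ite_eq' univ (1 : Equiv.Perm (Fin m)) (fun _ => (1:ℝ))]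
      simp
    rw [Finset.sum_congr rfl hsum1, Finset.sum_const, nsmul_eq_mul, mul_one]
    -- card T
    have hcard : T.card = n.descFactorial m := by
      rw [hT]
      rw [← Fintype.card_subtype]
      rw [Fintype.card_congr (Equiv.subtypeInjectiveEquivEmbedding (Fin m) (Fin n))]
      rw [Fintype.card_embedding_eq, Fintype.card_fin, Fintype.card_fin]
    rw [hcard]
    have hfac : ((n - m).factorial : ℝ) * (n.descFactorial m : ℝ) = (n.factorial : ℝ) := by
      exact_mod_cast congrArg (Nat.cast (R := ℝ)) (Nat.factorial_mul_descFactorial hmn)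
    have hne : ((n - m).factorial : ℝ) ≠ 0 := by
      exact_mod_cast (n - m).factorial_ne_zero
    field_simp
    linear_combination hfac
  · -- case I ≠ J
    intro hIJ
    rw [hInt]
    refine Finset.sum_eq_zero fun k _ => Finset.sum_eq_zero fun σ _ => ?_
    rw [if_neg, mul_zero]
    intro hall
    apply hIJ
    refine (Finset.eq_of_subset_of_card_le ?_ (by rw [hI, hJ])).symm
    intro x hx
    have hx' : x ∈ Set.range J' := by
      rw [hJ', Finset.range_orderEmbOfFin]
      exact Finset.mem_coe.mpr hx
    obtain ⟨b, hb⟩ := hx'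
    rw [← hb, ← hall b, hI']
    exact Finset.orderEmbOfFin_mem I hI (σ b)
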